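/- Let P_{A_m B_m} be joint distributions on a countable product A×B such that V(P_{A_m B_m}, P_{AB}) → 0 and H(P_{A_m B_m}) → H(P_{AB}) < ∞. Then the marginal entropies converge: H(P_{A_m}) → H(P_A). -/

import Mathlib

def IsPMF {α : Type*} (p : α → ℝ) : Prop := (∀ a, 0 ≤ p a) ∧ ∑' a, p a = 1

/-- Shannon entropy in bits, valued in `ℝ≥0∞`. -/
noncomputable def Hen {α : Type*} (p : α → ℝ) : ENNReal :=
  ∑' a, ENNReal.ofReal (-(p a * Real.logb 2 (p a)))

open Filter Real Topology

lemma IsPMF.summable' {α : Type*} {p : α → ℝ} (h : IsPMF p) : Summable p := by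
  by_contra hs
  have h2 := h.2
  rw [tsum_eq_zero_of_not_summable hs] at h2
  exact one_ne_zero h2.symm

/-- Fatou-type lower semicontinuity for `ℝ≥0∞`-valued tsums. -/
lemma fatou_tsum {α : Type*} {f : ℕ → α → ENNReal} {g : α → ENNReal}
    (h : ∀ a, Tendsto (fun m => f m a) atTop (nhds (g a))) :
    ∑' a, g a ≤ liminf (fun m => ∑' a, f m a) atTop := by
  rw [ENNReal.tsum_eq_iSup_sum]
  refine iSup_le fun s => ?_
  have h1 : Tendsto (fun m => ∑ a ∈ s, f m a) atTop (nhds (∑ a ∈ s, g a)) :=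
    tendsto_finset_sum _ fun a _ => h a
  calc ∑ a ∈ s, g a = liminf (fun m => ∑ a ∈ s, f m a) atTop := h1.liminf_eq.symm
    _ ≤ liminf (fun m => ∑' a, f m a) atTop :=
        liminf_le_liminf (Eventually.of_forall fun m => ENNReal.sum_le_tsum s)

/-- If `xₙ + yₙ → a + b < ∞` and both `liminf`s are bounded below by `a`, `b`,
then `xₙ → a`. -/
lemma tendsto_of_add_liminf {x y : ℕ → ENNReal} {a b : ENNReal} (hab : a + b ≠ ⊤)
    (h : Tendsto (fun n => x n + y n) atTop (nhds (a + b)))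
    (ha : a ≤ liminf x atTop) (hb : b ≤ liminf y atTop) :
    Tendsto x atTop (nhds a) := by
  have haT : a ≠ ⊤ := fun h' => hab (by simp [h'])
  have hbT : b ≠ ⊤ := fun h' => hab (by simp [h'])
  rw [ENNReal.tendsto_nhds haT]
  intro ε hε
  have hε2 : (0 : ENNReal) < ε / 2 := ENNReal.half_pos hε.ne'
  have hlow : ∀ᶠ n in atTop, a - ε ≤ x n := by
    rcases le_or_gt a ε with h' | h'
    · exact Eventually.of_forall fun n => by simp [tsub_eq_zero_of_le h']
    · have h0 : a ≠ 0 := fun h0 => by simp [h0] at h'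
      have : a - ε < liminf x atTop :=
        lt_of_lt_of_le (ENNReal.sub_lt_self haT h0 hε.ne') ha
      exact (eventually_lt_of_lt_liminf this).mono fun n hn => hn.le
  have h2 := (ENNReal.tendsto_nhds hab).1 h (ε / 2) hε2
  have hupp : ∀ᶠ n in atTop, x n ≤ a + ε := by
    rcases le_or_gt b (ε / 2) with hb' | hb'
    · refine h2.mono fun n hn => ?_
      calc x n ≤ x n + y n := le_self_add
        _ ≤ a + b + ε / 2 := hn.2
        _ ≤ a + ε := by
            rw [add_assoc]
            refine add_le_add_right ?_ a
            calc b + ε / 2 ≤ ε / 2 + ε / 2 := add_le_add_left hb' _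
              _ = ε := ENNReal.add_halves ε
    · have hb0 : b ≠ 0 := fun h0 => by simp [h0] at hb'
      have hby : ∀ᶠ n in atTop, b - ε / 2 < y n :=
        eventually_lt_of_lt_liminf
          (lt_of_lt_of_le (ENNReal.sub_lt_self hbT hb0 hε2.ne') hb)
      refine (h2.and hby).mono fun n ⟨h1, h2'⟩ => ?_
      have key : x n + (b - ε / 2) ≤ (a + ε) + (b - ε / 2) := by
        calc x n + (b - ε / 2) ≤ x n + y n := add_le_add_right h2'.le _
          _ ≤ a + b + ε / 2 := h1.2
          _ = (a + ε) + (b - ε / 2) := by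
              have hc : b - ε / 2 + ε / 2 = b := tsub_add_cancel_of_le hb'.le
              calc a + b + ε / 2 = a + (b - ε / 2 + ε / 2) + ε / 2 := by rw [hc]
                _ = a + (ε / 2 + ε / 2) + (b - ε / 2) := by ring
                _ = (a + ε) + (b - ε / 2) := by rw [ENNReal.add_halves]
      exact (ENNReal.add_le_add_iff_right
        (ne_top_of_le_ne_top hbT (tsub_le_self : b - ε / 2 ≤ b))).1 key
  exact (hlow.and hupp).mono fun n hn => ⟨hn.1, hn.2⟩

/-- The basic pointwise splitting of an entropy term. -/
lemma entropy_term_split {x y : ℝ} (hx : 0 ≤ x) (hxy : x ≤ y) (hy : y ≤ 1) :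
    ENNReal.ofReal (-(x * Real.logb 2 x)) =
      ENNReal.ofReal (x * Real.logb 2 (y / x)) +
        ENNReal.ofReal (-(x * Real.logb 2 y)) := by
  rcases eq_or_lt_of_le hx with hx0 | hx0
  · simp [← hx0]
  · have hy0 : 0 < y := lt_of_lt_of_le hx0 hxy
    have hu : 0 ≤ x * Real.logb 2 (y / x) := by
      apply mul_nonneg hx
      exact Real.logb_nonneg one_lt_two ((one_le_div hx0).2 hxy)
    have hv : 0 ≤ -(x * Real.logb 2 y) := by
      rw [neg_nonneg]
      exact mul_nonpos_of_nonneg_of_nonpos hx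
        (Real.logb_nonpos one_lt_two hy0.le hy)
    rw [← ENNReal.ofReal_add hu hv]
    congr 1
    rw [Real.logb_div hy0.ne' hx0.ne']
    ring

/-- Identity used for continuity: `x * logb 2 (y / x) = (x log y + negMulLog x)/log 2`. -/
lemma cond_term_eq {x y : ℝ} (hx : 0 ≤ x) (hxy : x ≤ y) :
    x * Real.logb 2 (y / x) = (x * Real.log y + Real.negMulLog x) / Real.log 2 := by
  rcases eq_or_lt_of_le hx with hx0 | hx0
  · simp [← hx0, Real.negMulLog]
  · have hy0 : 0 < y := lt_of_lt_of_le hx0 hxy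
    rw [Real.logb, Real.log_div hy0.ne' hx0.ne', Real.negMulLog]
    ring

/-- The bound `x * logb 2 (y/x) ≤ y / log 2`. -/
lemma cond_term_le {x y : ℝ} (hx : 0 ≤ x) (hxy : x ≤ y) :
    x * Real.logb 2 (y / x) ≤ y / Real.log 2 := by
  rcases eq_or_lt_of_le hx with hx0 | hx0
  · rw [← hx0, zero_mul]
    exact div_nonneg (le_trans hx hxy) (Real.log_nonneg one_le_two)
  · have hy0 : 0 < y := lt_of_lt_of_le hx0 hxy
    have hd : 0 < y / x := div_pos hy0 hx0
    have := Real.log_le_sub_one_of_pos hd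
    calc x * Real.logb 2 (y / x) = x * Real.log (y / x) / Real.log 2 := by
          rw [Real.logb]; ring
      _ ≤ x * (y / x - 1) / Real.log 2 := by
          gcongr
      _ = (y - x) / Real.log 2 := by
          field_simp
      _ ≤ y / Real.log 2 := by
          gcongr
          linarith

lemma cond_term_nonneg {x y : ℝ} (hx : 0 ≤ x) (hxy : x ≤ y) :
    0 ≤ x * Real.logb 2 (y / x) := by
  rcases eq_or_lt_of_le hx with hx0 | hx0
  · rw [← hx0]; simp
  · exact mul_nonneg hx
      (Real.logb_nonneg one_lt_two ((one_le_div hx0).2 hxy))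

lemma neg_mul_logb_eq (x : ℝ) :
    -(x * Real.logb 2 x) = Real.negMulLog x / Real.log 2 := by
  rw [Real.logb, Real.negMulLog]; ring

/-- The chain rule for entropy. -/
lemma chain_rule {A B : Type*} [Countable A] [Countable B] {p : A × B → ℝ}
    (hp : IsPMF p) :
    Hen p = Hen (fun a => ∑' b, p (a, b)) +
      ∑' ab : A × B, ENNReal.ofReal (p ab * Real.logb 2 ((∑' b, p (ab.1, b)) / p ab)) := by
  have hsum : Summable p := hp.summable'
  have hsa : ∀ a, Summable fun b => p (a, b) := fun a => hsum.prod_factor a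
  set q : A → ℝ := fun a => ∑' b, p (a, b) with hq
  have hq0 : ∀ a, 0 ≤ q a := fun a => tsum_nonneg fun b => hp.1 _
  have hpq : ∀ a b, p (a, b) ≤ q a := fun a b =>
    Summable.le_tsum (hsa a) b fun j _ => hp.1 _
  have hq1 : ∀ a, q a ≤ 1 := by
    intro a
    rw [← hp.2]
    exact Summable.tsum_le_tsum_of_inj (fun b => (a, b))
      (fun b₁ b₂ h => (Prod.mk.injEq _ _ _ _ ▸ h).2)
      (fun c _ => hp.1 c) (fun b => le_rfl) (hsa a) hsum
  have key : ∀ ab : A × B,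
      ENNReal.ofReal (-(p ab * Real.logb 2 (p ab))) =
        ENNReal.ofReal (p ab * Real.logb 2 (q ab.1 / p ab)) +
          ENNReal.ofReal (-(p ab * Real.logb 2 (q ab.1))) := by
    rintro ⟨a, b⟩
    exact entropy_term_split (hp.1 _) (hpq a b) (hq1 a)
  have step1 : Hen p =
      (∑' ab : A × B, ENNReal.ofReal (p ab * Real.logb 2 (q ab.1 / p ab))) +
        ∑' ab : A × B, ENNReal.ofReal (-(p ab * Real.logb 2 (q ab.1))) := by
    rw [Hen, tsum_congr key, ENNReal.tsum_add]
  have step2 : (∑' ab : A × B, ENNReal.ofReal (-(p ab * Real.logb 2 (q ab.1)))) =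
      Hen q := by
    rw [ENNReal.tsum_prod', Hen]
    refine tsum_congr fun a => ?_
    have hc : 0 ≤ -Real.logb 2 (q a) := by
      rw [neg_nonneg]
      exact Real.logb_nonpos one_lt_two (hq0 a) (hq1 a)
    have : ∀ b : B, ENNReal.ofReal (-(p (a, b) * Real.logb 2 (q a))) =
        ENNReal.ofReal (p (a, b)) * ENNReal.ofReal (-Real.logb 2 (q a)) := by
      intro b
      rw [← ENNReal.ofReal_mul (hp.1 _)]
      congr 1; ring
    rw [tsum_congr this, ENNReal.tsum_mul_right,
      ← ENNReal.ofReal_tsum_of_nonneg (fun b => hp.1 _) (hsa a),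
      ← ENNReal.ofReal_mul (hq0 a)]
    congr 1; ring
  rw [step1, step2, add_comm]

theorem marginal_entropy_convergence
    {A B : Type*} [Countable A] [Countable B]
    (pm : ℕ → A × B → ℝ) (p : A × B → ℝ)
    (hpm : ∀ m, IsPMF (pm m)) (hp : IsPMF p)
    (hfin : Hen p ≠ ⊤)
    (hV : Filter.Tendsto (fun m => ∑' ab : A × B, |pm m ab - p ab|)
      Filter.atTop (nhds 0))
    (hH : Filter.Tendsto (fun m => Hen (pm m)) Filter.atTop (nhds (Hen p))) :
    Filter.Tendsto (fun m => Hen fun a => ∑' b, pm m (a, b))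
      Filter.atTop (nhds (Hen fun a => ∑' b, p (a, b))) := by
  have hsump : Summable p := hp.summable'
  have hsumm : ∀ m, Summable (pm m) := fun m => (hpm m).summable'
  set q : A → ℝ := fun a => ∑' b, p (a, b) with hqdef
  set qm : ℕ → A → ℝ := fun m a => ∑' b, pm m (a, b) with hqmdef
  have hsa : ∀ a, Summable fun b => p (a, b) := fun a => hsump.prod_factor a
  have hsam : ∀ m a, Summable fun b => pm m (a, b) := fun m a =>
    (hsumm m).prod_factor a
  have hq0 : ∀ a, 0 ≤ q a := fun a => tsum_nonneg fun b => hp.1 _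
  have hqm0 : ∀ m a, 0 ≤ qm m a := fun m a => tsum_nonneg fun b => (hpm m).1 _
  have hpq : ∀ ab : A × B, p ab ≤ q ab.1 := fun ab =>
    Summable.le_tsum (hsa ab.1) ab.2 fun j _ => hp.1 _
  have hpqm : ∀ m (ab : A × B), pm m ab ≤ qm m ab.1 := fun m ab =>
    Summable.le_tsum (hsam m ab.1) ab.2 fun j _ => (hpm m).1 _
  -- summability of the differences
  have hdsum : ∀ m, Summable fun ab : A × B => |pm m ab - p ab| := by
    intro m
    apply Summable.of_nonneg_of_le (fun ab => abs_nonneg _)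
      (fun ab => ?_) ((hsumm m).add hsump)
    calc |pm m ab - p ab| ≤ |pm m ab| + |p ab| := abs_sub _ _
      _ = pm m ab + p ab := by
          rw [abs_of_nonneg ((hpm m).1 _), abs_of_nonneg (hp.1 _)]
  -- pointwise convergence of pm
  have hpt : ∀ ab : A × B, Tendsto (fun m => pm m ab) atTop (nhds (p ab)) := by
    intro ab
    have habs : Tendsto (fun m => |pm m ab - p ab|) atTop (nhds 0) := by
      apply squeeze_zero (fun m => abs_nonneg _) (fun m => ?_) hV
      exact Summable.le_tsum (hdsum m) ab fun j _ => abs_nonneg _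
    rw [tendsto_iff_dist_tendsto_zero]
    simpa [Real.dist_eq] using habs
  -- pointwise convergence of the marginals
  have hqt : ∀ a, Tendsto (fun m => qm m a) atTop (nhds (q a)) := by
    intro a
    have habs : Tendsto (fun m => |qm m a - q a|) atTop (nhds 0) := by
      apply squeeze_zero (fun m => abs_nonneg _) (fun m => ?_) hV
      have hdiff : qm m a - q a = ∑' b, (pm m (a, b) - p (a, b)) := by
        rw [Summable.tsum_sub (hsam m a) (hsa a)]
      rw [hdiff]
      calc |∑' b, (pm m (a, b) - p (a, b))| ≤ ∑' b, |pm m (a, b) - p (a, b)| := by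
            simpa using norm_tsum_le_tsum_norm (f := fun b => pm m (a, b) - p (a, b))
              (by simpa using ((hdsum m).prod_factor a))
        _ ≤ ∑' ab : A × B, |pm m ab - p ab| :=
            Summable.tsum_le_tsum_of_inj (fun b => (a, b))
              (fun b₁ b₂ h => (Prod.mk.injEq _ _ _ _ ▸ h).2)
              (fun c _ => abs_nonneg _) (fun b => le_rfl)
              ((hdsum m).prod_factor a) (hdsum m)
    rw [tendsto_iff_dist_tendsto_zero]
    simpa [Real.dist_eq] using habs
  -- continuity of the entropy term function
  have hF : Continuous fun x : ℝ => ENNReal.ofReal (-(x * Real.logb 2 x)) := by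
    have : (fun x : ℝ => ENNReal.ofReal (-(x * Real.logb 2 x))) =
        fun x => ENNReal.ofReal (Real.negMulLog x / Real.log 2) := by
      funext x; rw [neg_mul_logb_eq]
    rw [this]
    exact ENNReal.continuous_ofReal.comp
      (Real.continuous_negMulLog.div_const _)
  -- termwise convergence of the marginal entropy terms
  have hmargpt : ∀ a, Tendsto
      (fun m => ENNReal.ofReal (-(qm m a * Real.logb 2 (qm m a)))) atTop
      (nhds (ENNReal.ofReal (-(q a * Real.logb 2 (q a))))) :=
    fun a => (hF.tendsto _).comp (hqt a)
  -- termwise convergence of the conditional entropy terms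
  have hcondpt : ∀ ab : A × B, Tendsto
      (fun m => ENNReal.ofReal (pm m ab * Real.logb 2 (qm m ab.1 / pm m ab))) atTop
      (nhds (ENNReal.ofReal (p ab * Real.logb 2 (q ab.1 / p ab)))) := by
    intro ab
    rcases eq_or_lt_of_le (hq0 ab.1) with hq0' | hq0'
    · -- q ab.1 = 0, hence p ab = 0
      have hp0 : p ab = 0 := le_antisymm (hq0'.symm ▸ hpq ab) (hp.1 _)
      have hreal : Tendsto
          (fun m => pm m ab * Real.logb 2 (qm m ab.1 / pm m ab)) atTop (nhds 0) := by
        apply squeeze_zero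
          (fun m => cond_term_nonneg ((hpm m).1 _) (hpqm m ab))
          (fun m => cond_term_le ((hpm m).1 _) (hpqm m ab))
        have := (hqt ab.1).div_const (Real.log 2)
        rw [← hq0'] at this
        simpa using this
      have := (ENNReal.continuous_ofReal.tendsto 0).comp hreal
      simpa [hp0, Function.comp_def] using this
    · -- q ab.1 > 0
      have heq : ∀ m, pm m ab * Real.logb 2 (qm m ab.1 / pm m ab) =
          (pm m ab * Real.log (qm m ab.1) + Real.negMulLog (pm m ab)) / Real.log 2 :=
        fun m => cond_term_eq ((hpm m).1 _) (hpqm m ab)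
      have heqp : p ab * Real.logb 2 (q ab.1 / p ab) =
          (p ab * Real.log (q ab.1) + Real.negMulLog (p ab)) / Real.log 2 :=
        cond_term_eq (hp.1 _) (hpq ab)
      have hreal : Tendsto
          (fun m => (pm m ab * Real.log (qm m ab.1) + Real.negMulLog (pm m ab)) /
            Real.log 2) atTop
          (nhds ((p ab * Real.log (q ab.1) + Real.negMulLog (p ab)) / Real.log 2)) := by
        apply Tendsto.div_const
        apply Tendsto.add
        · exact (hpt ab).mul
            (((Real.continuousAt_log hq0'.ne').tendsto).comp (hqt ab.1))
        · exact (Real.continuous_negMulLog.tendsto _).comp (hpt ab)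
      have := (ENNReal.continuous_ofReal.tendsto _).comp hreal
      simp only [Function.comp_def] at this ⊢
      rw [heqp]
      simpa [heq] using this
  -- chain rules
  have chainp : Hen p = Hen q +
      ∑' ab : A × B, ENNReal.ofReal (p ab * Real.logb 2 (q ab.1 / p ab)) :=
    chain_rule hp
  have chainm : ∀ m, Hen (pm m) = Hen (qm m) +
      ∑' ab : A × B, ENNReal.ofReal (pm m ab * Real.logb 2 (qm m ab.1 / pm m ab)) :=
    fun m => chain_rule (hpm m)
  set Hc : ENNReal :=
    ∑' ab : A × B, ENNReal.ofReal (p ab * Real.logb 2 (q ab.1 / p ab)) with hHc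
  set Hcm : ℕ → ENNReal := fun m =>
    ∑' ab : A × B, ENNReal.ofReal (pm m ab * Real.logb 2 (qm m ab.1 / pm m ab))
    with hHcm
  have hab : Hen q + Hc ≠ ⊤ := by rw [← chainp]; exact hfin
  have hHsum : Tendsto (fun m => Hen (qm m) + Hcm m) atTop (nhds (Hen q + Hc)) := by
    have : (fun m => Hen (qm m) + Hcm m) = fun m => Hen (pm m) := by
      funext m; rw [chainm m]
    rw [this, ← chainp]
    exact hH
  have hliminf1 : Hen q ≤ liminf (fun m => Hen (qm m)) atTop := by
    apply fatou_tsum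
    exact hmargpt
  have hliminf2 : Hc ≤ liminf Hcm atTop := by
    apply fatou_tsum
    exact hcondpt
  exact tendsto_of_add_liminf hab hHsum hliminf1 hliminf2
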